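/- Let δ ∈ GL_{2d}(𝔽_p) have order not divisible by p, with eigenvalues λ₁, …, λ_{2d} (in an algebraic closure). If for all i, j the ratio λᵢ/λⱼ is never an eigenvalue of δ, then the 𝔽_p[⟨δ⟩]-modules V = 𝔽_p^{2d} and End(V) (with δ acting by conjugation) have no common irreducible submodule. -/

import Mathlib

open Polynomial

lemma aux_charpoly_isRoot_iff {K : Type*} [Field K] {n : Type*} [Fintype n] [DecidableEq n]
    (C : Matrix n n K) (μ : K) :
    C.charpoly.IsRoot μ ↔ ∃ v, v ≠ 0 ∧ C.mulVec v = μ • v := by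
  have heval : C.charpoly.eval μ = (μ • (1 : Matrix n n K) - C).det := by
    rw [Matrix.charpoly, ← Polynomial.coe_evalRingHom, RingHom.map_det]
    congr 1
    ext i j
    by_cases h : i = j <;>
      simp [h, Matrix.charmatrix_apply, Matrix.one_apply, Matrix.smul_apply]
  constructor
  · intro h
    have hdet : (μ • (1 : Matrix n n K) - C).det = 0 := by
      rw [← heval]; exact h
    obtain ⟨v, hv, hv0⟩ := (Matrix.exists_mulVec_eq_zero_iff).2 hdet
    refine ⟨v, hv, ?_⟩
    have := hv0
    rw [Matrix.sub_mulVec, Matrix.smul_mulVec, Matrix.one_mulVec, sub_eq_zero] at this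
    exact this.symm
  · rintro ⟨v, hv, hv0⟩
    have : (μ • (1 : Matrix n n K) - C).mulVec v = 0 := by
      rw [Matrix.sub_mulVec, Matrix.smul_mulVec, Matrix.one_mulVec, hv0, sub_self]
    have hdet : (μ • (1 : Matrix n n K) - C).det = 0 :=
      (Matrix.exists_mulVec_eq_zero_iff).1 ⟨v, hv, this⟩
    rw [Polynomial.IsRoot, heval]; exact hdet

lemma aux_aeval_restrict {F V : Type*} [CommRing F] [AddCommGroup V] [Module F V]
    (f : V →ₗ[F] V) {W : Submodule F V} (h : ∀ x ∈ W, f x ∈ W) (q : F[X]) (v : W) :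
    ((Polynomial.aeval (f.restrict h) q) v : V) = (Polynomial.aeval f q) v := by
  induction q using Polynomial.induction_on' with
  | add p q hp hq => simp [hp, hq]
  | monomial k a =>
      simp only [Polynomial.aeval_monomial, Module.End.mul_apply,
        Module.algebraMap_end_apply, LinearMap.map_smul,
        Submodule.coe_smul, LinearMap.smul_apply]
      rw [Module.End.pow_restrict]
      simp [LinearMap.restrict_apply]

lemma aux_eigen_of_pow {K V : Type*} [Field K] [AddCommGroup V] [Module K V]
    (f : Module.End K V) (lam : K) :
    ∀ (k : ℕ) (v : V), v ≠ 0 → ((f - lam • (1 : Module.End K V)) ^ k) v = 0 →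
      ∃ w, w ≠ 0 ∧ f w = lam • w := by
  intro k
  induction k with
  | zero => intro v hv h; simp at h; exact absurd h hv
  | succ k ih =>
      intro v hv h
      by_cases hu : (f - lam • (1 : Module.End K V)) v = 0
      · refine ⟨v, hv, ?_⟩
        have := hu
        simp only [LinearMap.sub_apply, LinearMap.smul_apply, Module.End.one_apply,
          sub_eq_zero] at this
        exact this
      · refine ih ((f - lam • (1 : Module.End K V)) v) hu ?_
        rw [← Module.End.mul_apply, ← pow_succ]
        exact h

def auxMatEquiv (F : Type*) [CommSemiring F] (n : Type*) :
    Matrix n n F ≃ₗ[F] (n × n → F) where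
  toFun M x := M x.1 x.2
  map_add' _ _ := rfl
  map_smul' _ _ := rfl
  invFun w := Matrix.of fun k l => w (k, l)
  left_inv _ := rfl
  right_inv _ := rfl

@[simp] lemma auxMatEquiv_apply {F : Type*} [CommSemiring F] {n : Type*}
    (M : Matrix n n F) (x : n × n) : auxMatEquiv F n M x = M x.1 x.2 := rfl

@[simp] lemma auxMatEquiv_symm_apply {F : Type*} [CommSemiring F] {n : Type*}
    (w : n × n → F) (k l : n) : (auxMatEquiv F n).symm w k l = w (k, l) := rfl

set_option maxHeartbeats 2000000 in
theorem stmt_7 (p d : ℕ) [Fact p.Prime] (hd : 0 < d)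
    (δ : Matrix.GeneralLinearGroup (Fin (2*d)) (ZMod p))
    (hord : ¬ p ∣ orderOf δ)
    -- no ratio of two eigenvalues (over an algebraic closure) is an eigenvalue:
    (heig : ∀ a b : AlgebraicClosure (ZMod p),
      (((δ : Matrix (Fin (2*d)) (Fin (2*d)) (ZMod p)).map
          (algebraMap (ZMod p) (AlgebraicClosure (ZMod p)))).charpoly.IsRoot a) →
      (((δ : Matrix (Fin (2*d)) (Fin (2*d)) (ZMod p)).map
          (algebraMap (ZMod p) (AlgebraicClosure (ZMod p)))).charpoly.IsRoot b) →
      ¬ (((δ : Matrix (Fin (2*d)) (Fin (2*d)) (ZMod p)).map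
          (algebraMap (ZMod p) (AlgebraicClosure (ZMod p)))).charpoly.IsRoot (a / b))) :
    -- `V` and `End V` have no common irreducible `𝔽_p[⟨δ⟩]`-submodule:
    ¬ ∃ (S : Submodule (ZMod p) (Fin (2*d) → ZMod p))
        (T : Submodule (ZMod p) (Matrix (Fin (2*d)) (Fin (2*d)) (ZMod p)))
        (hS : ∀ v ∈ S, Matrix.mulVec (δ : Matrix (Fin (2*d)) (Fin (2*d)) (ZMod p)) v ∈ S)
        (_hT : ∀ M ∈ T, (δ : Matrix (Fin (2*d)) (Fin (2*d)) (ZMod p)) * M *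
          ((δ⁻¹ : Matrix.GeneralLinearGroup (Fin (2*d)) (ZMod p)) :
            Matrix (Fin (2*d)) (Fin (2*d)) (ZMod p)) ∈ T),
        S ≠ ⊥ ∧
        (∀ S' : Submodule (ZMod p) (Fin (2*d) → ZMod p), S' ≤ S →
          (∀ v ∈ S', Matrix.mulVec (δ : Matrix (Fin (2*d)) (Fin (2*d)) (ZMod p)) v ∈ S') →
          S' = ⊥ ∨ S' = S) ∧
        T ≠ ⊥ ∧
        (∀ T' : Submodule (ZMod p) (Matrix (Fin (2*d)) (Fin (2*d)) (ZMod p)), T' ≤ T →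
          (∀ M ∈ T', (δ : Matrix (Fin (2*d)) (Fin (2*d)) (ZMod p)) * M *
            ((δ⁻¹ : Matrix.GeneralLinearGroup (Fin (2*d)) (ZMod p)) :
              Matrix (Fin (2*d)) (Fin (2*d)) (ZMod p)) ∈ T') →
          T' = ⊥ ∨ T' = T) ∧
        -- a `δ`-equivariant linear isomorphism between `S` and `T`:
        ∃ e : S ≃ₗ[ZMod p] T, ∀ v : S,
          (e ⟨Matrix.mulVec (δ : Matrix (Fin (2*d)) (Fin (2*d)) (ZMod p)) v.1, hS v.1 v.2⟩ :
              Matrix (Fin (2*d)) (Fin (2*d)) (ZMod p)) =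
            (δ : Matrix (Fin (2*d)) (Fin (2*d)) (ZMod p)) * (e v : Matrix (Fin (2*d)) (Fin (2*d)) (ZMod p)) *
            ((δ⁻¹ : Matrix.GeneralLinearGroup (Fin (2*d)) (ZMod p)) :
              Matrix (Fin (2*d)) (Fin (2*d)) (ZMod p)) := by
  rintro ⟨S, T, hS, hT, hSbot, -, hTbot, -, e, he⟩
  classical
  set K := AlgebraicClosure (ZMod p) with hKdef
  set D : Matrix (Fin (2*d)) (Fin (2*d)) (ZMod p) :=
    (δ : Matrix (Fin (2*d)) (Fin (2*d)) (ZMod p)) with hDdef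
  set Dinv : Matrix (Fin (2*d)) (Fin (2*d)) (ZMod p) :=
    ((δ⁻¹ : Matrix.GeneralLinearGroup (Fin (2*d)) (ZMod p)) :
      Matrix (Fin (2*d)) (Fin (2*d)) (ZMod p)) with hDinvdef
  have hDDinv : D * Dinv = 1 := by
    rw [hDdef, hDinvdef, ← Units.val_mul, mul_inv_cancel]
    rfl
  have hDinvD : Dinv * D = 1 := by
    rw [hDdef, hDinvdef, ← Units.val_mul, inv_mul_cancel]
    rfl
  -- the two endomorphisms over `ZMod p`
  set f : Module.End (ZMod p) (Fin (2*d) → ZMod p) := Matrix.toLinAlgEquiv' D with hfdef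
  have hSf : ∀ x ∈ S, f x ∈ S := by
    intro x hx
    rw [hfdef, Matrix.toLinAlgEquiv'_apply]
    exact hS x hx
  set fS : Module.End (ZMod p) S := f.restrict hSf with hfSdef
  set g : Module.End (ZMod p) (Matrix (Fin (2*d)) (Fin (2*d)) (ZMod p)) :=
    (LinearMap.mulRight (ZMod p) Dinv) ∘ₗ (LinearMap.mulLeft (ZMod p) D) with hgdef
  have hgapply : ∀ M, g M = D * M * Dinv := by
    intro M; simp [hgdef, mul_assoc]
  have hTg : ∀ M ∈ T, g M ∈ T := by
    intro M hM; rw [hgapply]; exact hT M hM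
  set gT : Module.End (ZMod p) T := g.restrict hTg with hgTdef
  haveI : Nontrivial S := Submodule.nontrivial_iff_ne_bot.mpr hSbot
  -- equivariance
  have hST : ∀ s : S, gT (e s) = e (fS s) := by
    intro s
    have h2 : fS s = (⟨Matrix.mulVec D s.1, hS s.1 s.2⟩ : S) := by
      apply Subtype.ext
      simp [hfSdef, LinearMap.restrict_apply, hfdef, Matrix.toLinAlgEquiv'_apply]
    apply Subtype.ext
    rw [h2, he s]
    simp [hgTdef, LinearMap.restrict_apply, hgapply]
    rfl
  -- Cayley-Hamilton transferred to `fS` for both big charpolys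
  have hfCH : Polynomial.aeval fS (Matrix.charpoly D) = 0 := by
    have h0 : Polynomial.aeval f (Matrix.charpoly D) = 0 := by
      rw [hfdef, Polynomial.aeval_algHom_apply
        (Matrix.toLinAlgEquiv' : Matrix (Fin (2*d)) (Fin (2*d)) (ZMod p) ≃ₐ[ZMod p] _) D,
        Matrix.aeval_self_charpoly]
      simp
    apply LinearMap.ext; intro s; apply Subtype.ext
    rw [hfSdef]
    rw [aux_aeval_restrict f hSf _ s, h0]
    rfl
  have hgCH : Polynomial.aeval fS (LinearMap.charpoly g) = 0 := by
    have hgTCH : Polynomial.aeval gT (LinearMap.charpoly g) = 0 := by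
      apply LinearMap.ext; intro t; apply Subtype.ext
      rw [hgTdef]
      rw [aux_aeval_restrict g hTg _ t, g.aeval_self_charpoly]
      rfl
    have halg : (e.conjAlgEquiv (ZMod p) : Module.End (ZMod p) S ≃ₐ[ZMod p] Module.End (ZMod p) T) fS = gT := by
      apply LinearMap.ext; intro t
      have h3 := hST (e.symm t)
      rw [e.apply_symm_apply] at h3
      show e.conj fS t = gT t
      rw [LinearEquiv.conj_apply]
      simp only [LinearMap.comp_apply, LinearEquiv.coe_coe]
      exact h3.symm
    have h2 := Polynomial.aeval_algHom_apply
      (e.conjAlgEquiv (ZMod p) : Module.End (ZMod p) S ≃ₐ[ZMod p] Module.End (ZMod p) T) fS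
      (LinearMap.charpoly g)
    rw [halg, hgTCH] at h2
    exact (e.conjAlgEquiv (ZMod p)).injective (by rw [map_zero]; exact h2.symm)
  -- the minimal polynomial of `fS`
  have hint : IsIntegral (ZMod p) fS :=
    ⟨fS.charpoly, fS.charpoly_monic, by
      rw [← Polynomial.aeval_def]; exact fS.aeval_self_charpoly⟩
  have hmdvd1 : minpoly (ZMod p) fS ∣ Matrix.charpoly D := minpoly.dvd _ _ hfCH
  have hmdvd2 : minpoly (ZMod p) fS ∣ LinearMap.charpoly g := minpoly.dvd _ _ hgCH
  have hdegm : ((minpoly (ZMod p) fS).map (algebraMap (ZMod p) K)).degree ≠ 0 := by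
    rw [Polynomial.degree_map]
    have h1 := Polynomial.natDegree_pos_iff_degree_pos.mp (minpoly.natDegree_pos hint)
    exact fun h0 => absurd (h0 ▸ h1) (lt_irrefl _)
  obtain ⟨μ, hμ⟩ := IsAlgClosed.exists_root
    ((minpoly (ZMod p) fS).map (algebraMap (ZMod p) K)) hdegm
  set A := D.map (algebraMap (ZMod p) K) with hAdef
  set Ainv := Dinv.map (algebraMap (ZMod p) K) with hAinvdef
  have hAAinv : A * Ainv = 1 := by
    rw [hAdef, hAinvdef, ← Matrix.map_mul, hDDinv]
    simp
  have hAinvA : Ainv * A = 1 := by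
    rw [hAdef, hAinvdef, ← Matrix.map_mul, hDinvD]
    simp
  have hμV : A.charpoly.IsRoot μ := by
    rw [hAdef, Matrix.charpoly_map]
    exact hμ.dvd (Polynomial.map_dvd _ hmdvd1)
  -- matrix of `g` in the standard basis of the matrix space
  set bF := Module.Basis.ofEquivFun (auxMatEquiv (ZMod p) (Fin (2*d))) with hbFdef
  set CF := LinearMap.toMatrix bF bF g with hCFdef
  have hbF : ∀ k l : Fin (2*d), bF (k, l) = Matrix.single k l 1 := by
    intro k l
    have h0 : bF (k, l) = (auxMatEquiv (ZMod p) (Fin (2*d))).symm (Pi.single (k, l) 1) := by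
      rw [hbFdef]
      exact congrFun (Module.Basis.coe_ofEquivFun _) (k, l)
    rw [h0]
    ext a b
    rw [auxMatEquiv_symm_apply]
    simp only [Pi.single_apply, Matrix.single, Matrix.of_apply]
    by_cases h1 : a = k <;> by_cases h2 : b = l <;>
      simp [h1, h2, Prod.ext_iff, eq_comm]
  have hCF : ∀ i j k l, CF (i,j) (k,l) = D i k * Dinv l j := by
    intro i j k l
    rw [hCFdef, LinearMap.toMatrix_apply, hbF k l]
    rw [hbFdef, Module.Basis.ofEquivFun_repr_apply, auxMatEquiv_apply]
    rw [hgapply, Matrix.mul_apply]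
    rw [Finset.sum_eq_single l]
    · rw [Matrix.mul_single_apply_same, mul_one]
    · intro b _ hb
      rw [Matrix.mul_single_apply_of_ne 1 k l i b hb D, zero_mul]
    · intro hl
      exact absurd (Finset.mem_univ l) hl
  have hCK : ∀ (i j : Fin (2*d)) (y : Fin (2*d) × Fin (2*d)),
      (CF.map (algebraMap (ZMod p) K)) (i,j) y = A i y.1 * Ainv y.2 j := by
    rintro i j ⟨k, l⟩
    rw [Matrix.map_apply, hCF, map_mul]
    rw [hAdef, hAinvdef]
    simp [Matrix.map_apply]
  have hμE : ((CF.map (algebraMap (ZMod p) K)).charpoly).IsRoot μ := by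
    rw [Matrix.charpoly_map, LinearMap.charpoly_toMatrix g bF]
    exact hμ.dvd (Polynomial.map_dvd _ hmdvd2)
  obtain ⟨w, hw0, hww⟩ := (aux_charpoly_isRoot_iff _ μ).1 hμE
  set Mm : Matrix (Fin (2*d)) (Fin (2*d)) K := Matrix.of fun k l => w (k, l) with hMmdef
  have hMm0 : Mm ≠ 0 := by
    intro h
    apply hw0
    funext y
    have := congrFun (congrFun h y.1) y.2
    simpa [hMmdef] using this
  have hMmconj : A * Mm * Ainv = μ • Mm := by
    ext i j
    have h1 : ∑ a : Fin (2*d), ∑ b : Fin (2*d),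
        (CF.map (algebraMap (ZMod p) K)) (i,j) (a, b) * w (a, b) = μ * w (i,j) := by
      have h0 := congrFun hww (i, j)
      rw [Matrix.mulVec, dotProduct, Fintype.sum_prod_type] at h0
      simpa using h0
    have h2 : (A * Mm * Ainv) i j = μ * w (i, j) := by
      calc (A * Mm * Ainv) i j
          = ∑ b, (∑ a, A i a * Mm a b) * Ainv b j := by
            rw [Matrix.mul_apply]
            exact Finset.sum_congr rfl fun b _ => by rw [Matrix.mul_apply]
        _ = ∑ b, ∑ a, A i a * Ainv b j * w (a, b) := by
            refine Finset.sum_congr rfl fun b _ => ?_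
            rw [Finset.sum_mul]
            refine Finset.sum_congr rfl fun a _ => ?_
            have h3 : Mm a b = w (a, b) := rfl
            rw [h3]; ring
        _ = ∑ a, ∑ b, A i a * Ainv b j * w (a, b) := Finset.sum_comm
        _ = ∑ a : Fin (2*d), ∑ b : Fin (2*d),
              (CF.map (algebraMap (ZMod p) K)) (i,j) (a, b) * w (a, b) := by
            refine Finset.sum_congr rfl fun a _ => Finset.sum_congr rfl fun b _ => ?_
            rw [hCK i j (a, b)]
        _ = μ * w (i, j) := h1
    rw [h2]
    show _ = μ * Mm i j
    rfl
  have hAM : A * Mm = μ • (Mm * A) := by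
    have h1 := congrArg (· * A) hMmconj
    simp only [smul_mul_assoc] at h1
    rw [mul_assoc (A * Mm), hAinvA, mul_one] at h1
    exact h1
  -- the generalized eigenvector argument over `K`
  set fA : Module.End K (Fin (2*d) → K) := Matrix.toLinAlgEquiv' A with hfAdef
  have hfAapply : ∀ u, fA u = A.mulVec u := fun u => Matrix.toLinAlgEquiv'_apply A u
  have hexist : ∃ lam : K,
      ¬ (fA.maxGenEigenspace lam ≤ LinearMap.ker (Matrix.mulVecLin Mm)) := by
    by_contra hcon
    push_neg at hcon
    have htop : (⊤ : Submodule K (Fin (2*d) → K)) ≤ LinearMap.ker (Matrix.mulVecLin Mm) := by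
      rw [← Module.End.iSup_maxGenEigenspace_eq_top fA]
      exact iSup_le hcon
    apply hMm0
    ext k l
    have h1 : Mm.mulVec (Pi.single l 1) = 0 := by
      have := htop (Submodule.mem_top : (Pi.single l 1 : Fin (2*d) → K) ∈ ⊤)
      simpa [LinearMap.mem_ker] using this
    have h2 := congrFun h1 k
    rw [Matrix.mulVec_single] at h2
    simpa using h2
  obtain ⟨lam, hlam⟩ := hexist
  obtain ⟨v, hvmem, hvker⟩ := SetLike.not_le_iff_exists.mp hlam
  have hMv0 : Mm.mulVec v ≠ 0 := by
    intro h
    exact hvker (LinearMap.mem_ker.mpr (by simpa using h))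
  have hv0 : v ≠ 0 := by
    intro h
    apply hMv0
    rw [h, Matrix.mulVec_zero]
  obtain ⟨k, hk⟩ := (Module.End.mem_maxGenEigenspace fA lam v).1 hvmem
  obtain ⟨w1, hw1, hw1e⟩ := aux_eigen_of_pow fA lam k v hv0 hk
  have hlamroot : A.charpoly.IsRoot lam := by
    refine (aux_charpoly_isRoot_iff A lam).2 ⟨w1, hw1, ?_⟩
    rw [← hfAapply]; exact hw1e
  have hlam0 : lam ≠ 0 := by
    intro h0
    apply hw1
    have hz : A.mulVec w1 = 0 := by
      rw [← hfAapply, hw1e, h0, zero_smul]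
    calc w1 = (Ainv * A).mulVec w1 := by rw [hAinvA, Matrix.one_mulVec]
      _ = Ainv.mulVec (A.mulVec w1) := by rw [Matrix.mulVec_mulVec]
      _ = 0 := by rw [hz, Matrix.mulVec_zero]
  -- the commutation relation and its powers
  have hstep : ∀ u, (fA - (μ*lam) • (1 : Module.End K (Fin (2*d) → K))) (Mm.mulVec u)
      = μ • Mm.mulVec ((fA - lam • (1 : Module.End K (Fin (2*d) → K))) u) := by
    intro u
    simp only [LinearMap.sub_apply, LinearMap.smul_apply, Module.End.one_apply, hfAapply]
    rw [Matrix.mulVec_mulVec, hAM]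
    rw [Matrix.smul_mulVec, Matrix.mulVec_sub, Matrix.mulVec_smul, smul_sub, smul_smul,
      ← Matrix.mulVec_mulVec]
  have hcommpow : ∀ (j : ℕ) (u : Fin (2*d) → K),
      ((fA - (μ*lam) • (1 : Module.End K (Fin (2*d) → K))) ^ j) (Mm.mulVec u)
        = μ^j • Mm.mulVec (((fA - lam • (1 : Module.End K (Fin (2*d) → K))) ^ j) u) := by
    intro j
    induction j with
    | zero => intro u; simp
    | succ j ih =>
        intro u
        rw [pow_succ (fA - (μ*lam) • (1 : Module.End K (Fin (2*d) → K))) j, Module.End.mul_apply,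
          pow_succ (fA - lam • (1 : Module.End K (Fin (2*d) → K))) j, Module.End.mul_apply]
        rw [hstep u, map_smul, ih ((fA - lam • (1 : Module.End K (Fin (2*d) → K))) u), smul_smul, ← pow_succ']
  have hmem2 : ((fA - (μ*lam) • (1 : Module.End K (Fin (2*d) → K))) ^ k) (Mm.mulVec v) = 0 := by
    rw [hcommpow k v, hk, Matrix.mulVec_zero, smul_zero]
  obtain ⟨w2, hw2, hw2e⟩ := aux_eigen_of_pow fA (μ*lam) k (Mm.mulVec v) hMv0 hmem2
  have hroot2 : A.charpoly.IsRoot (μ*lam) := by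
    refine (aux_charpoly_isRoot_iff A (μ*lam)).2 ⟨w2, hw2, ?_⟩
    rw [← hfAapply]; exact hw2e
  have hfinal := heig (μ*lam) lam hroot2 hlamroot
  rw [mul_div_cancel_right₀ μ hlam0] at hfinal
  exact hfinal hμV
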